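/- Let G⁽⁴⁾₁, …, G⁽⁴⁾₁₆ be the sixteen four-qubit states of the paper's Theorem 7, viewed in (ℂ² ⊗ ℂ²) ⊗ (ℂ² ⊗ ℂ²). For every pair α, β ∈ {1, …, 16}, there exists a unitary operator U' on the two-qubit space ℂ² ⊗ ℂ² such that G⁽⁴⁾_α = (I' ⊗ U') G⁽⁴⁾_β, where I' is the identity on the first two qubits. In particular, every state of the set is obtained from any other by a unitary acting on the last two qubits alone (the 2 : 2 bipartition property). -/

import Mathlib

open scoped InnerProductSpace

noncomputable section

/-- The standard basis kets `|0⟩, |1⟩` of a qubit `ℂ² = EuclideanSpace ℂ (Fin 2)`. -/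
def ket2 (i : Fin 2) : EuclideanSpace ℂ (Fin 2) := EuclideanSpace.single i 1

/-- Tensor product of vectors of Euclidean spaces, realized concretely:
`(x ⊗ y) (i, j) = x i * y j`.  The induced inner product on
`EuclideanSpace ℂ (ι × κ)` is exactly the tensor-product inner product. -/
def tp {ι κ : Type*} [Fintype ι] [Fintype κ]
    (x : EuclideanSpace ℂ ι) (y : EuclideanSpace ℂ κ) : EuclideanSpace ℂ (ι × κ) :=
  (WithLp.equiv 2 _).symm fun p => x p.1 * y p.2

/-- The four-qubit basis state `|abcd⟩ = |a⟩ ⊗ |b⟩ ⊗ |c⟩ ⊗ |d⟩`. -/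
def ket4 (a b c d : Fin 2) : EuclideanSpace ℂ (Fin 2 × Fin 2 × Fin 2 × Fin 2) :=
  tp (ket2 a) (tp (ket2 b) (tp (ket2 c) (ket2 d)))

/-- The sixteen four-qubit states `G⁽⁴⁾₁, …, G⁽⁴⁾₁₆` of the paper's Theorem 7
(indexed here by `0, …, 15`; odd paper-indices take the upper signs, even
paper-indices the lower signs). -/
def G4 : Fin 16 → EuclideanSpace ℂ (Fin 2 × Fin 2 × Fin 2 × Fin 2) :=
  ![(2 : ℂ)⁻¹ • (ket4 0 0 0 0 + ket4 0 1 1 1 + ket4 1 0 1 0 + ket4 1 1 0 1),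
    (2 : ℂ)⁻¹ • (ket4 0 0 0 0 - ket4 0 1 1 1 + ket4 1 0 1 0 - ket4 1 1 0 1),
    (2 : ℂ)⁻¹ • (ket4 0 0 0 0 + ket4 0 1 1 1 - ket4 1 0 1 0 - ket4 1 1 0 1),
    (2 : ℂ)⁻¹ • (ket4 0 0 0 0 - ket4 0 1 1 1 - ket4 1 0 1 0 + ket4 1 1 0 1),
    (2 : ℂ)⁻¹ • (ket4 0 0 0 1 + ket4 0 1 1 0 + ket4 1 0 1 1 + ket4 1 1 0 0),
    (2 : ℂ)⁻¹ • (ket4 0 0 0 1 - ket4 0 1 1 0 + ket4 1 0 1 1 - ket4 1 1 0 0),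
    (2 : ℂ)⁻¹ • (ket4 0 0 0 1 + ket4 0 1 1 0 - ket4 1 0 1 1 - ket4 1 1 0 0),
    (2 : ℂ)⁻¹ • (ket4 0 0 0 1 - ket4 0 1 1 0 - ket4 1 0 1 1 + ket4 1 1 0 0),
    (2 : ℂ)⁻¹ • (ket4 0 0 1 0 + ket4 0 1 0 1 + ket4 1 0 0 0 + ket4 1 1 1 1),
    (2 : ℂ)⁻¹ • (ket4 0 0 1 0 - ket4 0 1 0 1 + ket4 1 0 0 0 - ket4 1 1 1 1),
    (2 : ℂ)⁻¹ • (ket4 0 0 1 0 + ket4 0 1 0 1 - ket4 1 0 0 0 - ket4 1 1 1 1),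
    (2 : ℂ)⁻¹ • (ket4 0 0 1 0 - ket4 0 1 0 1 - ket4 1 0 0 0 + ket4 1 1 1 1),
    (2 : ℂ)⁻¹ • (ket4 0 0 1 1 + ket4 0 1 0 0 + ket4 1 0 0 1 + ket4 1 1 1 0),
    (2 : ℂ)⁻¹ • (ket4 0 0 1 1 - ket4 0 1 0 0 + ket4 1 0 0 1 - ket4 1 1 1 0),
    (2 : ℂ)⁻¹ • (ket4 0 0 1 1 + ket4 0 1 0 0 - ket4 1 0 0 1 - ket4 1 1 1 0),
    (2 : ℂ)⁻¹ • (ket4 0 0 1 1 - ket4 0 1 0 0 - ket4 1 0 0 1 + ket4 1 1 1 0)]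

/-- The operator `I' ⊗ U'` on the four-qubit space, acting as the identity on the
first two qubits and as the matrix `U'` on the last two qubits. -/
def idTwoTensorMat (U : Matrix (Fin 2 × Fin 2) (Fin 2 × Fin 2) ℂ)
    (v : EuclideanSpace ℂ (Fin 2 × Fin 2 × Fin 2 × Fin 2)) :
    EuclideanSpace ℂ (Fin 2 × Fin 2 × Fin 2 × Fin 2) :=
  (WithLp.equiv 2 _).symm fun p => ∑ q : Fin 2 × Fin 2, U p.2.2 q * v (p.1, p.2.1, q)

namespace G4Aux

/-- The permutation of the last two qubits implemented by state `i`. -/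
def sig (i : Fin 16) (p : Fin 2 × Fin 2) : Fin 2 × Fin 2 :=
  (p.1 + p.2 + (if (i : ℕ) / 8 % 2 = 1 then 1 else 0),
   p.2 + (if (i : ℕ) / 4 % 2 = 1 then 1 else 0))

/-- The sign exponent of state `i` at first-pair `p`. -/
def epsN (i : Fin 16) (p : Fin 2 × Fin 2) : ℕ :=
  ((i : ℕ) % 2) * (p.2 : ℕ) + ((i : ℕ) / 2 % 2) * (p.1 : ℕ)

def eps (i : Fin 16) (p : Fin 2 × Fin 2) : ℂ := (-1) ^ (epsN i p)

lemma sig_inj : ∀ (i : Fin 16) (p p'), sig i p = sig i p' ↔ p = p' := by decide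

lemma eps_mul_self (i p) : eps i p * eps i p = 1 := by
  rw [eps, ← pow_add]; exact Even.neg_one_pow ⟨_, rfl⟩

lemma star_eps (i p) : star (eps i p) = eps i p := by
  simp [eps]

lemma ket4_apply (a b c d : Fin 2) (p : Fin 2 × Fin 2 × Fin 2 × Fin 2) :
    ket4 a b c d p = (if p.1 = a then 1 else 0) * ((if p.2.1 = b then 1 else 0) *
      ((if p.2.2.1 = c then 1 else 0) * (if p.2.2.2 = d then 1 else 0))) := by
  simp [ket4, tp, ket2, EuclideanSpace.single_apply]


lemma G4_apply_0 (a b c d : Fin 2) :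
    G4 0 (a, b, c, d) = (2 : ℂ)⁻¹ * (eps 0 (a, b) * if (c, d) = sig 0 (a, b) then 1 else 0) := by
  rw [show G4 0 = (2:ℂ)⁻¹ • (ket4 0 0 0 0 + ket4 0 1 1 1 + ket4 1 0 1 0 + ket4 1 1 0 1) from rfl]
  fin_cases a <;> fin_cases b <;> fin_cases c <;> fin_cases d <;>
    simp +decide [PiLp.smul_apply, PiLp.add_apply, PiLp.sub_apply, ket4_apply, smul_eq_mul,
      eps, epsN, sig]

lemma G4_apply_1 (a b c d : Fin 2) :
    G4 1 (a, b, c, d) = (2 : ℂ)⁻¹ * (eps 1 (a, b) * if (c, d) = sig 1 (a, b) then 1 else 0) := by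
  rw [show G4 1 = (2:ℂ)⁻¹ • (ket4 0 0 0 0 - ket4 0 1 1 1 + ket4 1 0 1 0 - ket4 1 1 0 1) from rfl]
  fin_cases a <;> fin_cases b <;> fin_cases c <;> fin_cases d <;>
    simp +decide [PiLp.smul_apply, PiLp.add_apply, PiLp.sub_apply, ket4_apply, smul_eq_mul,
      eps, epsN, sig]

lemma G4_apply_2 (a b c d : Fin 2) :
    G4 2 (a, b, c, d) = (2 : ℂ)⁻¹ * (eps 2 (a, b) * if (c, d) = sig 2 (a, b) then 1 else 0) := by
  rw [show G4 2 = (2:ℂ)⁻¹ • (ket4 0 0 0 0 + ket4 0 1 1 1 - ket4 1 0 1 0 - ket4 1 1 0 1) from rfl]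
  fin_cases a <;> fin_cases b <;> fin_cases c <;> fin_cases d <;>
    simp +decide [PiLp.smul_apply, PiLp.add_apply, PiLp.sub_apply, ket4_apply, smul_eq_mul,
      eps, epsN, sig]

lemma G4_apply_3 (a b c d : Fin 2) :
    G4 3 (a, b, c, d) = (2 : ℂ)⁻¹ * (eps 3 (a, b) * if (c, d) = sig 3 (a, b) then 1 else 0) := by
  rw [show G4 3 = (2:ℂ)⁻¹ • (ket4 0 0 0 0 - ket4 0 1 1 1 - ket4 1 0 1 0 + ket4 1 1 0 1) from rfl]
  fin_cases a <;> fin_cases b <;> fin_cases c <;> fin_cases d <;>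
    simp +decide [PiLp.smul_apply, PiLp.add_apply, PiLp.sub_apply, ket4_apply, smul_eq_mul,
      eps, epsN, sig]

lemma G4_apply_4 (a b c d : Fin 2) :
    G4 4 (a, b, c, d) = (2 : ℂ)⁻¹ * (eps 4 (a, b) * if (c, d) = sig 4 (a, b) then 1 else 0) := by
  rw [show G4 4 = (2:ℂ)⁻¹ • (ket4 0 0 0 1 + ket4 0 1 1 0 + ket4 1 0 1 1 + ket4 1 1 0 0) from rfl]
  fin_cases a <;> fin_cases b <;> fin_cases c <;> fin_cases d <;>
    simp +decide [PiLp.smul_apply, PiLp.add_apply, PiLp.sub_apply, ket4_apply, smul_eq_mul,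
      eps, epsN, sig]

lemma G4_apply_5 (a b c d : Fin 2) :
    G4 5 (a, b, c, d) = (2 : ℂ)⁻¹ * (eps 5 (a, b) * if (c, d) = sig 5 (a, b) then 1 else 0) := by
  rw [show G4 5 = (2:ℂ)⁻¹ • (ket4 0 0 0 1 - ket4 0 1 1 0 + ket4 1 0 1 1 - ket4 1 1 0 0) from rfl]
  fin_cases a <;> fin_cases b <;> fin_cases c <;> fin_cases d <;>
    simp +decide [PiLp.smul_apply, PiLp.add_apply, PiLp.sub_apply, ket4_apply, smul_eq_mul,
      eps, epsN, sig]

lemma G4_apply_6 (a b c d : Fin 2) :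
    G4 6 (a, b, c, d) = (2 : ℂ)⁻¹ * (eps 6 (a, b) * if (c, d) = sig 6 (a, b) then 1 else 0) := by
  rw [show G4 6 = (2:ℂ)⁻¹ • (ket4 0 0 0 1 + ket4 0 1 1 0 - ket4 1 0 1 1 - ket4 1 1 0 0) from rfl]
  fin_cases a <;> fin_cases b <;> fin_cases c <;> fin_cases d <;>
    simp +decide [PiLp.smul_apply, PiLp.add_apply, PiLp.sub_apply, ket4_apply, smul_eq_mul,
      eps, epsN, sig]

lemma G4_apply_7 (a b c d : Fin 2) :
    G4 7 (a, b, c, d) = (2 : ℂ)⁻¹ * (eps 7 (a, b) * if (c, d) = sig 7 (a, b) then 1 else 0) := by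
  rw [show G4 7 = (2:ℂ)⁻¹ • (ket4 0 0 0 1 - ket4 0 1 1 0 - ket4 1 0 1 1 + ket4 1 1 0 0) from rfl]
  fin_cases a <;> fin_cases b <;> fin_cases c <;> fin_cases d <;>
    simp +decide [PiLp.smul_apply, PiLp.add_apply, PiLp.sub_apply, ket4_apply, smul_eq_mul,
      eps, epsN, sig]

lemma G4_apply_8 (a b c d : Fin 2) :
    G4 8 (a, b, c, d) = (2 : ℂ)⁻¹ * (eps 8 (a, b) * if (c, d) = sig 8 (a, b) then 1 else 0) := by
  rw [show G4 8 = (2:ℂ)⁻¹ • (ket4 0 0 1 0 + ket4 0 1 0 1 + ket4 1 0 0 0 + ket4 1 1 1 1) from rfl]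
  fin_cases a <;> fin_cases b <;> fin_cases c <;> fin_cases d <;>
    simp +decide [PiLp.smul_apply, PiLp.add_apply, PiLp.sub_apply, ket4_apply, smul_eq_mul,
      eps, epsN, sig]

lemma G4_apply_9 (a b c d : Fin 2) :
    G4 9 (a, b, c, d) = (2 : ℂ)⁻¹ * (eps 9 (a, b) * if (c, d) = sig 9 (a, b) then 1 else 0) := by
  rw [show G4 9 = (2:ℂ)⁻¹ • (ket4 0 0 1 0 - ket4 0 1 0 1 + ket4 1 0 0 0 - ket4 1 1 1 1) from rfl]
  fin_cases a <;> fin_cases b <;> fin_cases c <;> fin_cases d <;>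
    simp +decide [PiLp.smul_apply, PiLp.add_apply, PiLp.sub_apply, ket4_apply, smul_eq_mul,
      eps, epsN, sig]

lemma G4_apply_10 (a b c d : Fin 2) :
    G4 10 (a, b, c, d) = (2 : ℂ)⁻¹ * (eps 10 (a, b) * if (c, d) = sig 10 (a, b) then 1 else 0) := by
  rw [show G4 10 = (2:ℂ)⁻¹ • (ket4 0 0 1 0 + ket4 0 1 0 1 - ket4 1 0 0 0 - ket4 1 1 1 1) from rfl]
  fin_cases a <;> fin_cases b <;> fin_cases c <;> fin_cases d <;>
    simp +decide [PiLp.smul_apply, PiLp.add_apply, PiLp.sub_apply, ket4_apply, smul_eq_mul,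
      eps, epsN, sig]

lemma G4_apply_11 (a b c d : Fin 2) :
    G4 11 (a, b, c, d) = (2 : ℂ)⁻¹ * (eps 11 (a, b) * if (c, d) = sig 11 (a, b) then 1 else 0) := by
  rw [show G4 11 = (2:ℂ)⁻¹ • (ket4 0 0 1 0 - ket4 0 1 0 1 - ket4 1 0 0 0 + ket4 1 1 1 1) from rfl]
  fin_cases a <;> fin_cases b <;> fin_cases c <;> fin_cases d <;>
    simp +decide [PiLp.smul_apply, PiLp.add_apply, PiLp.sub_apply, ket4_apply, smul_eq_mul,
      eps, epsN, sig]

lemma G4_apply_12 (a b c d : Fin 2) :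
    G4 12 (a, b, c, d) = (2 : ℂ)⁻¹ * (eps 12 (a, b) * if (c, d) = sig 12 (a, b) then 1 else 0) := by
  rw [show G4 12 = (2:ℂ)⁻¹ • (ket4 0 0 1 1 + ket4 0 1 0 0 + ket4 1 0 0 1 + ket4 1 1 1 0) from rfl]
  fin_cases a <;> fin_cases b <;> fin_cases c <;> fin_cases d <;>
    simp +decide [PiLp.smul_apply, PiLp.add_apply, PiLp.sub_apply, ket4_apply, smul_eq_mul,
      eps, epsN, sig]

lemma G4_apply_13 (a b c d : Fin 2) :
    G4 13 (a, b, c, d) = (2 : ℂ)⁻¹ * (eps 13 (a, b) * if (c, d) = sig 13 (a, b) then 1 else 0) := by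
  rw [show G4 13 = (2:ℂ)⁻¹ • (ket4 0 0 1 1 - ket4 0 1 0 0 + ket4 1 0 0 1 - ket4 1 1 1 0) from rfl]
  fin_cases a <;> fin_cases b <;> fin_cases c <;> fin_cases d <;>
    simp +decide [PiLp.smul_apply, PiLp.add_apply, PiLp.sub_apply, ket4_apply, smul_eq_mul,
      eps, epsN, sig]

lemma G4_apply_14 (a b c d : Fin 2) :
    G4 14 (a, b, c, d) = (2 : ℂ)⁻¹ * (eps 14 (a, b) * if (c, d) = sig 14 (a, b) then 1 else 0) := by
  rw [show G4 14 = (2:ℂ)⁻¹ • (ket4 0 0 1 1 + ket4 0 1 0 0 - ket4 1 0 0 1 - ket4 1 1 1 0) from rfl]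
  fin_cases a <;> fin_cases b <;> fin_cases c <;> fin_cases d <;>
    simp +decide [PiLp.smul_apply, PiLp.add_apply, PiLp.sub_apply, ket4_apply, smul_eq_mul,
      eps, epsN, sig]

lemma G4_apply_15 (a b c d : Fin 2) :
    G4 15 (a, b, c, d) = (2 : ℂ)⁻¹ * (eps 15 (a, b) * if (c, d) = sig 15 (a, b) then 1 else 0) := by
  rw [show G4 15 = (2:ℂ)⁻¹ • (ket4 0 0 1 1 - ket4 0 1 0 0 - ket4 1 0 0 1 + ket4 1 1 1 0) from rfl]
  fin_cases a <;> fin_cases b <;> fin_cases c <;> fin_cases d <;>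
    simp +decide [PiLp.smul_apply, PiLp.add_apply, PiLp.sub_apply, ket4_apply, smul_eq_mul,
      eps, epsN, sig]

lemma G4_apply (i : Fin 16) (a b c d : Fin 2) :
    G4 i (a, b, c, d) = (2 : ℂ)⁻¹ * (eps i (a, b) * if (c, d) = sig i (a, b) then 1 else 0) := by
  fin_cases i
  · exact G4_apply_0 a b c d
  · exact G4_apply_1 a b c d
  · exact G4_apply_2 a b c d
  · exact G4_apply_3 a b c d
  · exact G4_apply_4 a b c d
  · exact G4_apply_5 a b c d
  · exact G4_apply_6 a b c d
  · exact G4_apply_7 a b c d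
  · exact G4_apply_8 a b c d
  · exact G4_apply_9 a b c d
  · exact G4_apply_10 a b c d
  · exact G4_apply_11 a b c d
  · exact G4_apply_12 a b c d
  · exact G4_apply_13 a b c d
  · exact G4_apply_14 a b c d
  · exact G4_apply_15 a b c d
/-- The signed permutation matrix of state `i` on the last two qubits. -/
def N (i : Fin 16) : Matrix (Fin 2 × Fin 2) (Fin 2 × Fin 2) ℂ :=
  Matrix.of fun q p => eps i p * (if q = sig i p then 1 else 0)

lemma N_mem (i : Fin 16) : N i ∈ Matrix.unitaryGroup (Fin 2 × Fin 2) ℂ := by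
  rw [Matrix.mem_unitaryGroup_iff']
  ext p p'
  rw [Matrix.mul_apply, Matrix.one_apply]
  have key : ∀ q : Fin 2 × Fin 2,
      (star (N i)) p q * N i q p' = if q = sig i p ∧ p = p' then 1 else 0 := by
    intro q
    rw [Matrix.star_apply]
    by_cases h1 : q = sig i p <;> by_cases h2 : p = p'
    · subst h2
      simp [N, h1, star_eps, eps_mul_self]
    · have h3 : q ≠ sig i p' := by
        rw [h1]; exact fun hc => h2 ((sig_inj i p p').mp hc)
      simp [N, h3, h2]
    · subst h2
      simp [N, h1]
    · simp [N, h1, h2]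
  rw [Finset.sum_congr rfl fun q _ => key q]
  by_cases h : p = p' <;> simp [h]

end G4Aux

open G4Aux

/-- Viewing the sixteen states in `(ℂ² ⊗ ℂ²) ⊗ (ℂ² ⊗ ℂ²)`, for
every pair `α, β` there is a unitary `U'` on the two-qubit space `ℂ² ⊗ ℂ²` with
`G⁽⁴⁾_α = (I' ⊗ U') G⁽⁴⁾_β`, where `I'` is the identity on the first two qubits:
every state of the set is obtained from any other by a unitary acting on the last
two qubits alone (the 2 : 2 bipartition property). -/
theorem G4_related_by_unitary_on_last_two_qubits (α β : Fin 16) :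
    ∃ U' : Matrix (Fin 2 × Fin 2) (Fin 2 × Fin 2) ℂ,
      U' ∈ Matrix.unitaryGroup (Fin 2 × Fin 2) ℂ ∧
      G4 α = idTwoTensorMat U' (G4 β) := by
  refine ⟨N α * star (N β), mul_mem (N_mem α) (Unitary.star_mem (N_mem β)), ?_⟩
  ext p
  obtain ⟨a, b, c, d⟩ := p
  show G4 α (a, b, c, d) = ∑ q : Fin 2 × Fin 2, (N α * star (N β)) (c, d) q * G4 β (a, b, q)
  have hβ : ∀ q : Fin 2 × Fin 2,
      G4 β (a, b, q) = (2 : ℂ)⁻¹ * (eps β (a, b) * if q = sig β (a, b) then 1 else 0) :=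
    fun q => G4_apply β a b q.1 q.2
  simp only [hβ, G4_apply, mul_ite, mul_one, mul_zero]
  rw [Finset.sum_ite_eq' Finset.univ (sig β (a, b))
    (fun q => (N α * star (N β)) (c, d) q * (2⁻¹ * eps β (a, b)))]
  simp only [Finset.mem_univ, if_true]
  rw [Matrix.mul_apply]
  have key : ∀ s : Fin 2 × Fin 2,
      N α (c, d) s * (star (N β)) s (sig β (a, b)) =
        if s = (a, b) ∧ (c, d) = sig α (a, b) then eps α (a, b) * eps β (a, b) else 0 := by
    intro s
    rw [Matrix.star_apply]
    by_cases h1 : s = (a, b)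
    · subst h1
      by_cases h2 : (c, d) = sig α (a, b) <;> simp [N, h2, star_eps]
    · have h3 : sig β (a, b) ≠ sig β s := fun hc => h1 ((sig_inj β s (a, b)).mp hc.symm)
      simp [N, h3, h1]
  rw [Finset.sum_congr rfl fun s _ => key s]
  by_cases h : (c, d) = sig α (a, b)
  · simp only [h, and_true, if_true]
    rw [Finset.sum_ite_eq' Finset.univ ((a, b) : Fin 2 × Fin 2)
      (fun _ => eps α (a, b) * eps β (a, b))]
    simp only [Finset.mem_univ, if_true]
    linear_combination -(2⁻¹ * eps α (a, b)) * eps_mul_self β (a, b)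
  · simp [h]

end
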